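/- Let G ∈ ℝ^{m×r} have full column rank r, and suppose G = B · [G₁; 0] where B is an invertible m×m matrix and G₁ ∈ ℝ^{m₁×r}. Let Σ = B diag(Σ₁₁, S) Bᵀ with Σ₁₁ ∈ ℝ^{m₁×m₁} symmetric positive definite and S symmetric positive semidefinite. Then Gᵀ Σ⁺ G = G₁ᵀ Σ₁₁⁻¹ G₁, and this matrix is positive definite. -/

import Mathlib

open Matrix

/-- `B` is the Moore–Penrose pseudoinverse of `A`: the four Penrose conditions. -/
def IsMoorePenrose {n m : Type*} [Fintype n] [Fintype m]
    (A : Matrix n m ℝ) (B : Matrix m n ℝ) : Prop :=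
  A * B * A = A ∧ B * A * B = B ∧ (A * B)ᵀ = A * B ∧ (B * A)ᵀ = B * A

/-- If G = B[G₁;0] with B invertible and Σ = B diag(Σ₁₁, S) Bᵀ, then
GᵀΣ⁺G = G₁ᵀΣ₁₁⁻¹G₁, which is positive definite. -/
theorem pseudoinverse_quadratic_form (m₁ m₂ r : ℕ)
    (G₁ : Matrix (Fin m₁) (Fin r) ℝ)
    (B : Matrix (Fin m₁ ⊕ Fin m₂) (Fin m₁ ⊕ Fin m₂) ℝ) (hB : IsUnit B.det)
    (S11 : Matrix (Fin m₁) (Fin m₁) ℝ) (hS11 : S11.PosDef)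
    (S : Matrix (Fin m₂) (Fin m₂) ℝ) (hS : S.PosSemidef)
    (G : Matrix (Fin m₁ ⊕ Fin m₂) (Fin r) ℝ)
    (hG : G = B * Matrix.fromRows G₁ 0)
    (hrank : G.rank = r)
    (Sigplus : Matrix (Fin m₁ ⊕ Fin m₂) (Fin m₁ ⊕ Fin m₂) ℝ)
    (hSigplus : IsMoorePenrose (B * Matrix.fromBlocks S11 0 0 S * Bᵀ) Sigplus) :
    Gᵀ * Sigplus * G = G₁ᵀ * S11⁻¹ * G₁ ∧ (Gᵀ * Sigplus * G).PosDef := by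
  have hS11u : IsUnit S11.det := isUnit_iff_ne_zero.mpr hS11.det_pos.ne'
  have hS11sym : S11ᵀ = S11 := hS11.isHermitian
  have hS11invsym : (S11⁻¹)ᵀ = S11⁻¹ := by
    rw [Matrix.transpose_nonsing_inv, hS11sym]
  have hBTu : IsUnit Bᵀ.det := by simpa [Matrix.det_transpose] using hB
  set Sg : Matrix (Fin m₁ ⊕ Fin m₂) (Fin m₁ ⊕ Fin m₂) ℝ :=
    B * Matrix.fromBlocks S11 0 0 S * Bᵀ with hSg
  set U : Matrix (Fin m₁ ⊕ Fin m₂) (Fin r) ℝ :=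
    (Bᵀ)⁻¹ * Matrix.fromRows (S11⁻¹ * G₁) (0 : Matrix (Fin m₂) (Fin r) ℝ) with hU
  have hG' : G = B * Matrix.fromRows G₁ (0 : Matrix (Fin m₂) (Fin r) ℝ) := hG
  have hSgU : Sg * U = G := by
    rw [hSg, hU, hG']
    rw [Matrix.mul_assoc (B * Matrix.fromBlocks S11 0 0 S) Bᵀ _,
      ← Matrix.mul_assoc Bᵀ _ _, Matrix.mul_nonsing_inv _ hBTu, Matrix.one_mul,
      Matrix.mul_assoc B _ _, Matrix.fromBlocks_mul_fromRows]
    simp [← Matrix.mul_assoc, Matrix.mul_nonsing_inv _ hS11u]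
  have hSgsym : Sgᵀ = Sg := by
    rw [hSg]
    have hSsym : Sᵀ = S := hS.isHermitian
    rw [Matrix.transpose_mul, Matrix.transpose_mul, Matrix.transpose_transpose,
      Matrix.fromBlocks_transpose]
    simp only [Matrix.transpose_zero, hS11sym, hSsym, Matrix.mul_assoc]
  -- the key identity
  have hUG : Uᵀ * G = G₁ᵀ * S11⁻¹ * G₁ := by
    rw [hU, hG', Matrix.transpose_mul, Matrix.transpose_nonsing_inv,
      Matrix.transpose_transpose]
    rw [Matrix.mul_assoc _ B⁻¹ _, ← Matrix.mul_assoc B⁻¹ B _,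
      Matrix.nonsing_inv_mul _ hB, Matrix.one_mul,
      Matrix.transpose_fromRows, Matrix.fromCols_mul_fromRows]
    simp [Matrix.transpose_mul, hS11invsym, Matrix.mul_assoc]
  have key : Gᵀ * Sigplus * G = G₁ᵀ * S11⁻¹ * G₁ := by
    obtain ⟨h1, -, -, -⟩ := hSigplus
    calc Gᵀ * Sigplus * G = (Sg * U)ᵀ * Sigplus * (Sg * U) := by rw [hSgU]
    _ = Uᵀ * (Sg * Sigplus * Sg) * U := by
        rw [Matrix.transpose_mul, hSgsym]; simp only [Matrix.mul_assoc]
    _ = Uᵀ * Sg * U := by rw [h1]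
    _ = G₁ᵀ * S11⁻¹ * G₁ := by rw [Matrix.mul_assoc, hSgU, hUG]
  refine ⟨key, ?_⟩
  rw [key]
  -- injectivity of G₁
  have hrankF : (Matrix.fromRows G₁ (0 : Matrix (Fin m₂) (Fin r) ℝ)).rank = r := by
    rw [← Matrix.rank_mul_eq_right_of_isUnit_det B (Matrix.fromRows G₁ (0 : Matrix (Fin m₂) (Fin r) ℝ)) hB, ← hG', hrank]
  have hInj : ∀ x : Fin r → ℝ, G₁ *ᵥ x = 0 → x = 0 := by
    intro x hx
    set F := Matrix.fromRows G₁ (0 : Matrix (Fin m₂) (Fin r) ℝ) with hF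
    have hker : LinearMap.ker F.mulVecLin = ⊥ := by
      have h1 := LinearMap.finrank_range_add_finrank_ker F.mulVecLin
      rw [Module.finrank_pi] at h1
      have h2 : Module.finrank ℝ (LinearMap.range F.mulVecLin) = r := hrankF
      rw [h2, Fintype.card_fin] at h1
      have h3 : Module.finrank ℝ (LinearMap.ker F.mulVecLin) = 0 := by omega
      exact Submodule.finrank_eq_zero.mp h3
    have hxker : x ∈ LinearMap.ker F.mulVecLin := by
      rw [LinearMap.mem_ker]
      show F *ᵥ x = 0
      rw [hF, Matrix.fromRows_mulVec, hx]
      ext (i | i) <;> simp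
    rw [hker] at hxker
    simpa using hxker
  have hS11inv : (S11⁻¹).PosDef := hS11.inv
  refine Matrix.PosDef.of_dotProduct_mulVec_pos ?_ ?_
  · show (G₁ᵀ * S11⁻¹ * G₁)ᴴ = _
    rw [Matrix.conjTranspose_eq_transpose_of_trivial, Matrix.transpose_mul,
      Matrix.transpose_mul, Matrix.transpose_transpose, hS11invsym, Matrix.mul_assoc]
  · intro x hx
    have hgx : G₁ *ᵥ x ≠ 0 := fun h => hx (hInj x h)
    have h2 := hS11inv.dotProduct_mulVec_pos hgx
    have e : star x ⬝ᵥ (G₁ᵀ * S11⁻¹ * G₁) *ᵥ x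
        = star (G₁ *ᵥ x) ⬝ᵥ S11⁻¹ *ᵥ (G₁ *ᵥ x) := by
      rw [Matrix.mul_assoc, ← Matrix.mulVec_mulVec, star_trivial, star_trivial,
        Matrix.dotProduct_mulVec, Matrix.vecMul_transpose, ← Matrix.mulVec_mulVec]
    exact e ▸ h2
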